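/- Let f be an endomorphism of the Higman group H = ⟨a₀,a₁,a₂,a₃ | aᵢaᵢ₊₁aᵢ⁻¹ = aᵢ₊₁², mod 4⟩ such that f(aᵢ) = aᵢ^{nᵢ} for nonzero integers n₀,n₁,n₂,n₃. Then nᵢ = 1 for all i, i.e., f is the identity. -/

import Mathlib

/-! ### The concrete Baumslag–Solitar-like group `HG = ℚ ⋊ ℤ` -/

@[ext]
structure HG where
  q : ℚ
  n : ℤ

namespace HG

instance : Mul HG := ⟨fun a b => ⟨a.q + 2 ^ a.n * b.q, a.n + b.n⟩⟩
instance : One HG := ⟨⟨0, 0⟩⟩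
instance : Inv HG := ⟨fun a => ⟨-(2 ^ (-a.n) * a.q), -a.n⟩⟩

theorem mul_def (a b : HG) : a * b = ⟨a.q + 2 ^ a.n * b.q, a.n + b.n⟩ := rfl
theorem one_def : (1 : HG) = ⟨0, 0⟩ := rfl
theorem inv_def (a : HG) : a⁻¹ = ⟨-(2 ^ (-a.n) * a.q), -a.n⟩ := rfl

instance : Group HG :=
  Group.ofLeftAxioms
    (fun a b c => by
      simp only [mul_def, HG.mk.injEq]
      constructor
      · rw [zpow_add₀ (two_ne_zero)]
        ring
      · ring)
    (fun a => by simp [mul_def, one_def])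
    (fun a => by
      simp only [inv_def, mul_def, one_def, HG.mk.injEq]
      constructor
      · ring
      · ring)

/-- the element `b` (with `t b t⁻¹ = b ^ 2`) -/
def bb : HG := ⟨1, 0⟩
/-- the element `t` -/
def tt : HG := ⟨0, 1⟩

theorem key_rel : tt * bb * tt⁻¹ = bb ^ 2 := by
  simp only [tt, bb, mul_def, inv_def, pow_two, HG.mk.injEq]
  norm_num

/-- `ℤ → HG`, `n ↦ bb ^ n` -/
def embB : Multiplicative ℤ →* HG where
  toFun := fun m => ⟨(m.toAdd : ℚ), 0⟩
  map_one' := by simp [one_def]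
  map_mul' := fun x y => by
    simp only [mul_def, HG.mk.injEq]
    constructor
    · push_cast [toAdd_mul]; ring
    · simp

/-- `ℤ → HG`, `n ↦ tt ^ n` -/
def embT : Multiplicative ℤ →* HG where
  toFun := fun m => ⟨0, m.toAdd⟩
  map_one' := by simp [one_def]
  map_mul' := fun x y => by simp [mul_def, toAdd_mul]

theorem embB_injective : Function.Injective embB := by
  intro x y h
  have : (x.toAdd : ℚ) = y.toAdd := congrArg HG.q h
  exact_mod_cast (by exact_mod_cast this : x.toAdd = y.toAdd)

theorem embT_injective : Function.Injective embT := by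
  intro x y h
  exact (by exact_mod_cast congrArg HG.n h : x.toAdd = y.toAdd)

theorem embB_eq_pow : embB = zpowersHom HG bb := by
  apply MonoidHom.ext_mint
  simp only [embB, zpowersHom_apply, toAdd_ofAdd, zpow_one, MonoidHom.coe_mk, OneHom.coe_mk]
  rfl

theorem embT_eq_pow : embT = zpowersHom HG tt := by
  apply MonoidHom.ext_mint
  simp only [embT, zpowersHom_apply, toAdd_ofAdd, zpow_one, MonoidHom.coe_mk, OneHom.coe_mk]
  rfl

theorem bb_zpow (k : ℤ) : bb ^ k = (⟨(k : ℚ), 0⟩ : HG) := by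
  have := DFunLike.congr_fun embB_eq_pow (Multiplicative.ofAdd k)
  simp only [zpowersHom_apply, toAdd_ofAdd] at this
  rw [← this]; rfl

theorem tt_zpow (k : ℤ) : tt ^ k = (⟨0, k⟩ : HG) := by
  have := DFunLike.congr_fun embT_eq_pow (Multiplicative.ofAdd k)
  simp only [zpowersHom_apply, toAdd_ofAdd] at this
  rw [← this]; rfl

theorem tt_zpow_notin_range {k : ℤ} (hk : k ≠ 0) : tt ^ k ∉ embB.range := by
  rintro ⟨m, hm⟩
  rw [tt_zpow] at hm
  exact hk (congrArg HG.n hm).symm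

theorem bb_zpow_notin_range {k : ℤ} (hk : k ≠ 0) : bb ^ k ∉ embT.range := by
  rintro ⟨m, hm⟩
  rw [bb_zpow] at hm
  have : (k : ℚ) = 0 := (congrArg HG.q hm).symm
  exact hk (by exact_mod_cast this)

theorem bb_zpow_ne_one {k : ℤ} (hk : k ≠ 0) : bb ^ k ≠ 1 := by
  rw [bb_zpow, one_def]
  intro h
  have : (k:ℚ) = 0 := congrArg HG.q h
  exact hk (by exact_mod_cast this)

end HG


open Monoid PushoutI

section Blocks

/-- exponent of a letter -/
def lexp (s : Bool) : ℤ := if s then 1 else -1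

theorem lexp_ne_zero (s : Bool) : lexp s ≠ 0 := by cases s <;> simp [lexp]

/-- group a word (list of letters with signs) into blocks with integer exponents -/
def grp : List (Bool × Bool) → List (Bool × ℤ)
  | [] => []
  | (i, s) :: t =>
    match grp t with
    | [] => [(i, lexp s)]
    | (j, k) :: r => if i = j then (j, lexp s + k) :: r else (i, lexp s) :: (j, k) :: r

theorem grp_nil : grp [] = [] := rfl

theorem grp_cons (i s : Bool) (t : List (Bool × Bool)) :
    grp ((i, s) :: t) = match grp t with
      | [] => [(i, lexp s)]
      | (j, k) :: r => if i = j then (j, lexp s + k) :: r else (i, lexp s) :: (j, k) :: r := rfl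

/-- head compatibility between a word and its block decomposition -/
def HeadMatch : List (Bool × Bool) → List (Bool × ℤ) → Prop
  | [], [] => True
  | (i, s) :: _, (j, k) :: _ => i = j ∧ (if s then 0 < k else k < 0)
  | _, _ => False

theorem headMatch_cons_nil (a : Bool × Bool) (t : List (Bool × Bool)) :
    ¬ HeadMatch (a :: t) [] := by
  obtain ⟨i, s⟩ := a
  exact id

theorem grp_spec : ∀ L : List (Bool × Bool),
    L.Chain' (fun a b => ¬(b.1 = a.1 ∧ b.2 = !a.2)) →
    (∀ p ∈ grp L, p.2 ≠ 0) ∧ (grp L).Chain' (fun p q => p.1 ≠ q.1) ∧ HeadMatch L (grp L) := by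
  intro L
  induction L with
  | nil => intro _; exact ⟨by simp [grp_nil], by simp [grp_nil, List.Chain'], trivial⟩
  | cons a t ih =>
    intro hch
    obtain ⟨i, s⟩ := a
    rcases t with _ | ⟨⟨j, s'⟩, t'⟩
    · refine ⟨?_, ?_, ?_⟩
      · intro p hp
        simp only [grp_cons, grp_nil, List.mem_singleton] at hp
        subst hp; exact lexp_ne_zero s
      · simp [grp_cons, grp_nil, List.Chain']
      · show i = i ∧ _
        refine ⟨rfl, ?_⟩
        cases s <;> simp [lexp]
    · have hch' := (List.isChain_cons_cons.mp hch).2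
      have hNC := (List.isChain_cons_cons.mp hch).1
      obtain ⟨hnz, hcha, hhm⟩ := ih hch'
      rcases hg : grp ((j, s') :: t') with _ | ⟨⟨j₂, k⟩, r⟩
      · rw [hg] at hhm; exact absurd hhm (headMatch_cons_nil _ _)
      · rw [hg] at hhm hnz hcha
        obtain ⟨rfl, hsk⟩ : j = j₂ ∧ (if s' then 0 < k else k < 0) := hhm
        by_cases hij : i = j
        · subst hij
          have hss : s' = s := by
            by_contra hss
            exact hNC ⟨rfl, by cases s <;> cases s' <;> simp_all⟩
          subst hss
          have hgrp : grp ((i, s') :: (i, s') :: t') = (i, lexp s' + k) :: r := by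
            rw [grp_cons, hg]; simp
          rw [hgrp]
          have hk' : if s' then 0 < lexp s' + k else lexp s' + k < 0 := by
            cases s' <;> simp [lexp] at hsk ⊢ <;> omega
          refine ⟨?_, ?_, ?_⟩
          · intro p hp
            rcases List.mem_cons.mp hp with rfl | hp
            · show lexp s' + k ≠ 0
              cases s' <;> simp [lexp] at hsk ⊢ <;> omega
            · exact hnz p (List.mem_cons_of_mem _ hp)
          · rcases r with _ | ⟨p, r'⟩
            · simp [List.Chain']
            · exact List.isChain_cons_cons.mpr ⟨(List.isChain_cons_cons.mp hcha).1,
                (List.isChain_cons_cons.mp hcha).2⟩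
          · exact ⟨rfl, hk'⟩
        · have hgrp : grp ((i, s) :: (j, s') :: t') = (i, lexp s) :: (j, k) :: r := by
            rw [grp_cons, hg]; simp [hij]
          rw [hgrp]
          refine ⟨?_, ?_, ?_⟩
          · intro p hp
            rcases List.mem_cons.mp hp with rfl | hp
            · exact lexp_ne_zero s
            · exact hnz p hp
          · exact List.isChain_cons_cons.mpr ⟨hij, hcha⟩
          · exact ⟨rfl, by cases s <;> simp [lexp]⟩

end Blocks

section Chain

variable {α : Type*} [DecidableEq α]

theorem reduce_tail {a : α × Bool} {t : List (α × Bool)}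
    (h : FreeGroup.reduce (a :: t) = a :: t) : FreeGroup.reduce t = t := by
  rcases hr : FreeGroup.reduce t with _ | ⟨hd, tl⟩
  · have h2 : ([a] : List (α × Bool)) = a :: t := by
      rw [← h, FreeGroup.reduce.cons, hr]
    have : t = [] := by injection h2 with _ h3; exact h3.symm
    rw [this]
  · have h2 : (if a.1 = hd.1 ∧ a.2 = !hd.2 then tl else a :: hd :: tl) = a :: t := by
      rw [← h, FreeGroup.reduce.cons, hr]
    split_ifs at h2 with hc
    · exfalso
      have hlen : (FreeGroup.reduce t).length ≤ t.length :=
        FreeGroup.Red.length_le FreeGroup.reduce.red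
      rw [hr] at hlen
      have hl2 := congrArg List.length h2
      simp only [List.length_cons] at hl2 hlen
      omega
    · injection h2

theorem toWord_chain (x : FreeGroup α) :
    x.toWord.Chain' (fun a b => ¬(b.1 = a.1 ∧ b.2 = !a.2)) := by
  have hred : FreeGroup.reduce x.toWord = x.toWord := FreeGroup.reduce_toWord x
  generalize hL : x.toWord = L at hred
  clear hL x
  induction L with
  | nil => simp [List.Chain']
  | cons a t ih =>
    have ht := reduce_tail hred
    rcases t with _ | ⟨b, t'⟩
    · simp [List.Chain']
    · refine List.isChain_cons_cons.mpr ⟨?_, ih ht⟩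
      obtain ⟨xa, sa⟩ := a
      obtain ⟨xb, sb⟩ := b
      rintro ⟨h1, h2⟩
      dsimp only at h1 h2
      rw [h1, h2] at hred
      exact FreeGroup.reduce.not (L₂ := []) hred

end Chain

section PingPong

variable {G : Bool → Type*} [∀ i, Group (G i)] {H : Type*} [Group H]
  (φ : ∀ i, H →* G i) (hφ : ∀ i, Function.Injective (φ i))
  (w : ∀ i, G i) (hw : ∀ (i : Bool) (k : ℤ), k ≠ 0 → (w i) ^ k ∉ (φ i).range)

/-- product of a block list in the pushout -/
def blockProd (M : List (Bool × ℤ)) : PushoutI φ :=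
  (M.map fun p => PushoutI.of (φ := φ) p.1 ((w p.1) ^ p.2)).prod

theorem blockProd_grp (L : List (Bool × Bool)) :
    blockProd φ w (grp L) =
      (L.map fun p => cond p.2 (PushoutI.of (φ := φ) p.1 (w p.1))
        (PushoutI.of (φ := φ) p.1 (w p.1))⁻¹).prod := by
  induction L with
  | nil => simp [blockProd, grp_nil]
  | cons a t ih =>
    obtain ⟨i, s⟩ := a
    have hletter : cond s (PushoutI.of (φ := φ) i (w i)) (PushoutI.of (φ := φ) i (w i))⁻¹ =
        PushoutI.of (φ := φ) i ((w i) ^ (lexp s)) := by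
      cases s <;> simp [lexp]
    rcases hg : grp t with _ | ⟨⟨j, k⟩, r⟩
    · have hgr : grp ((i, s) :: t) = [(i, lexp s)] := by rw [grp_cons, hg]
      rw [hgr]
      rw [hg] at ih
      simp only [blockProd, List.map_cons, List.map_nil, List.prod_nil, List.prod_cons] at ih ⊢
      rw [hletter, ← ih]
      try simp
    · by_cases hij : i = j
      · subst hij
        have hgr : grp ((i, s) :: t) = (i, lexp s + k) :: r := by rw [grp_cons, hg]; simp
        rw [hgr]
        rw [hg] at ih
        simp only [blockProd, List.map_cons, List.prod_cons] at ih ⊢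
        rw [hletter, ← ih, zpow_add, map_mul, mul_assoc]
      · have hgr : grp ((i, s) :: t) = (i, lexp s) :: (j, k) :: r := by
          rw [grp_cons, hg]; simp [hij]
        rw [hgr]
        rw [hg] at ih
        simp only [blockProd, List.map_cons, List.prod_cons] at ih ⊢
        rw [hletter, ← ih]

include hφ hw in
theorem pingpong_injective :
    Function.Injective (FreeGroup.lift (fun i => PushoutI.of (φ := φ) i (w i))) := by
  classical
  rw [injective_iff_map_eq_one]
  intro x hx
  by_contra hx1
  obtain ⟨hnz, hcha, hhm⟩ := grp_spec x.toWord (toWord_chain x)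
  have hne1 : ∀ p ∈ (grp x.toWord).map (fun p => (⟨p.1, (w p.1) ^ p.2⟩ : Σ i, G i)),
      p.2 ≠ 1 := by
    rintro p hp
    simp only [List.mem_map] at hp
    obtain ⟨q, hq, rfl⟩ := hp
    intro h1
    refine hw q.1 q.2 (hnz q hq) ?_
    rw [show (w q.1) ^ q.2 = 1 from h1]
    exact one_mem _
  have hchain : ((grp x.toWord).map (fun p => (⟨p.1, (w p.1) ^ p.2⟩ : Σ i, G i))).Chain'
      (fun l l' => l.1 ≠ l'.1) := (List.isChain_map _).mpr hcha
  set W : Monoid.CoprodI.Word G :=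
    ⟨(grp x.toWord).map (fun p => (⟨p.1, (w p.1) ^ p.2⟩ : Σ i, G i)), hne1, by exact hchain⟩ with hW
  have hWred : PushoutI.Reduced φ W := by
    rintro g hg
    simp only [hW, List.mem_map] at hg
    obtain ⟨q, hq, rfl⟩ := hg
    exact hw q.1 q.2 (hnz q hq)
  have hWprod : PushoutI.ofCoprodI (φ := φ) W.prod =
      FreeGroup.lift (fun i => PushoutI.of (φ := φ) i (w i)) x := by
    conv_rhs => rw [← FreeGroup.mk_toWord (x := x)]
    rw [FreeGroup.lift_mk, ← blockProd_grp]
    simp only [Monoid.CoprodI.Word.prod, hW, map_list_prod, List.map_map, blockProd]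
    congr 1
  have hmem : PushoutI.ofCoprodI (φ := φ) W.prod ∈ (PushoutI.base φ).range := by
    rw [hWprod, hx]
    exact one_mem _
  have hempty := PushoutI.Reduced.eq_empty_of_mem_range hφ hWred hmem
  have hnil : (grp x.toWord).map (fun p => (⟨p.1, (w p.1) ^ p.2⟩ : Σ i, G i)) = [] := by
    have := congrArg (fun W : Monoid.CoprodI.Word G => W.toList) hempty
    simpa [hW, Monoid.CoprodI.Word.empty] using this
  have hgnil : grp x.toWord = [] := by
    rcases h : grp x.toWord with _ | _
    · rfl
    · rw [h] at hnil; simp at hnil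
  rcases h : x.toWord with _ | ⟨c, t⟩
  · exact hx1 (FreeGroup.toWord_eq_nil_iff.mp h)
  · rw [h] at hgnil hhm
    rw [hgnil] at hhm
    exact headMatch_cons_nil c t hhm

end PingPong


/-! ### The two-level amalgam model -/

namespace HigmanModel

open Monoid PushoutI HG

/-- level-1 base maps -/
def ϕ1 : ∀ _ : Bool, Multiplicative ℤ →* HG := fun i => match i with
  | false => HG.embB
  | true => HG.embT

theorem hϕ1 : ∀ i, Function.Injective (ϕ1 i) := by
  intro i
  cases i
  · exact HG.embB_injective
  · exact HG.embT_injective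

/-- The level-1 pushout `P = B₍ᵢ,ᵢ₊₁₎ *_ℤ B₍ᵢ₊₁,ᵢ₊₂₎` -/
abbrev P : Type := PushoutI (G := fun _ : Bool => HG) ϕ1

def wP : ∀ _ : Bool, HG := fun i => match i with
  | false => HG.tt
  | true => HG.bb

theorem hwP : ∀ (i : Bool) (k : ℤ), k ≠ 0 → (wP i) ^ k ∉ (ϕ1 i).range := by
  intro i k hk
  cases i
  · exact HG.tt_zpow_notin_range hk
  · exact HG.bb_zpow_notin_range hk

/-- the free subgroup map into `P` -/
def m : FreeGroup Bool →* P :=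
  FreeGroup.lift (fun i => PushoutI.of (φ := ϕ1) i (wP i))

theorem m_inj : Function.Injective m := pingpong_injective ϕ1 hϕ1 wP hwP

/-- the swap automorphism of the free group -/
def sw : FreeGroup Bool →* FreeGroup Bool := FreeGroup.lift (fun i => FreeGroup.of (!i))

theorem sw_sw (x : FreeGroup Bool) : sw (sw x) = x := by
  have h : sw.comp sw = MonoidHom.id _ := by
    ext i
    cases i <;> simp [sw]
  calc sw (sw x) = (sw.comp sw) x := rfl
  _ = x := by rw [h]; rfl

theorem sw_inj : Function.Injective sw :=
  Function.LeftInverse.injective sw_sw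

/-- level-2 base maps -/
def ϕ2 : ∀ _ : Bool, FreeGroup Bool →* P := fun i => match i with
  | false => m
  | true => m.comp sw

theorem hϕ2 : ∀ i, Function.Injective (ϕ2 i) := by
  intro i
  cases i
  · exact m_inj
  · exact m_inj.comp sw_inj

/-- The level-2 pushout: the model group `Q` -/
abbrev Q : Type := PushoutI (G := fun _ : Bool => P) ϕ2

/-- elements of `P` -/
def pa0 : P := PushoutI.of (φ := ϕ1) false HG.tt
def pa2 : P := PushoutI.of (φ := ϕ1) true HG.bb
def pbf : P := PushoutI.of (φ := ϕ1) false HG.bb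
def ptt : P := PushoutI.of (φ := ϕ1) true HG.tt

theorem embB_ofAdd_one : HG.embB (Multiplicative.ofAdd 1) = HG.bb := by
  show (⟨((1:ℤ):ℚ), 0⟩ : HG) = HG.bb
  simp [HG.bb]

theorem embT_ofAdd_one : HG.embT (Multiplicative.ofAdd 1) = HG.tt := rfl

/-- the amalgamation identity in `P` -/
theorem pbf_eq_ptt : pbf = ptt := by
  have h1 := PushoutI.of_apply_eq_base (φ := ϕ1) false (Multiplicative.ofAdd 1)
  have h2 := PushoutI.of_apply_eq_base (φ := ϕ1) true (Multiplicative.ofAdd 1)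
  have e1 : ϕ1 false (Multiplicative.ofAdd 1) = HG.bb := embB_ofAdd_one
  have e2 : ϕ1 true (Multiplicative.ofAdd 1) = HG.tt := embT_ofAdd_one
  rw [e1] at h1
  rw [e2] at h2
  show PushoutI.of (φ := ϕ1) false HG.bb = PushoutI.of (φ := ϕ1) true HG.tt
  rw [h1, h2]

/-- the Baumslag-Solitar relation pushed into `P`, factor `i` -/
theorem relP (i : Bool) :
    PushoutI.of (φ := ϕ1) i HG.tt * PushoutI.of (φ := ϕ1) i HG.bb *
      (PushoutI.of (φ := ϕ1) i HG.tt)⁻¹ = (PushoutI.of (φ := ϕ1) i HG.bb) ^ 2 := by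
  rw [← map_inv, ← map_mul, ← map_mul, HG.key_rel, map_pow]

/-- the four generator images in `Q` -/
def A0 : Q := PushoutI.of (φ := ϕ2) false pa0
def A1 : Q := PushoutI.of (φ := ϕ2) false pbf
def A2 : Q := PushoutI.of (φ := ϕ2) false pa2
def A3 : Q := PushoutI.of (φ := ϕ2) true pbf

theorem m_of_false : m (FreeGroup.of false) = pa0 := by simp [m, pa0, wP]
theorem m_of_true : m (FreeGroup.of true) = pa2 := by simp [m, pa2, wP]

theorem sw_of (i : Bool) : sw (FreeGroup.of i) = FreeGroup.of (!i) := by simp [sw]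

/-- `a₀` looks the same from both copies -/
theorem A0_eq : A0 = PushoutI.of (φ := ϕ2) true pa2 := by
  have h1 := PushoutI.of_apply_eq_base (φ := ϕ2) false (FreeGroup.of false)
  have h2 := PushoutI.of_apply_eq_base (φ := ϕ2) true (FreeGroup.of false)
  have e1 : ϕ2 false (FreeGroup.of false) = pa0 := m_of_false
  have e2 : ϕ2 true (FreeGroup.of false) = pa2 := by
    show m (sw (FreeGroup.of false)) = pa2
    rw [sw_of]
    exact m_of_true
  rw [e1] at h1
  rw [e2] at h2
  show PushoutI.of (φ := ϕ2) false pa0 = PushoutI.of (φ := ϕ2) true pa2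
  rw [h1, h2]

/-- `a₂` looks the same from both copies -/
theorem A2_eq : A2 = PushoutI.of (φ := ϕ2) true pa0 := by
  have h1 := PushoutI.of_apply_eq_base (φ := ϕ2) false (FreeGroup.of true)
  have h2 := PushoutI.of_apply_eq_base (φ := ϕ2) true (FreeGroup.of true)
  have e1 : ϕ2 false (FreeGroup.of true) = pa2 := m_of_true
  have e2 : ϕ2 true (FreeGroup.of true) = pa0 := by
    show m (sw (FreeGroup.of true)) = pa0
    rw [sw_of]
    exact m_of_false
  rw [e1] at h1
  rw [e2] at h2
  show PushoutI.of (φ := ϕ2) false pa2 = PushoutI.of (φ := ϕ2) true pa0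
  rw [h1, h2]

/-- a helper to push a BS relation through `of i : P →* Q` -/
theorem push_rel (i j : Bool) :
    PushoutI.of (φ := ϕ2) i (PushoutI.of (φ := ϕ1) j HG.tt) *
      PushoutI.of (φ := ϕ2) i (PushoutI.of (φ := ϕ1) j HG.bb) *
      (PushoutI.of (φ := ϕ2) i (PushoutI.of (φ := ϕ1) j HG.tt))⁻¹ =
    (PushoutI.of (φ := ϕ2) i (PushoutI.of (φ := ϕ1) j HG.bb)) ^ 2 := by
  rw [← map_inv, ← map_mul, ← map_mul, relP, map_pow]

theorem rel01 : A0 * A1 * A0⁻¹ = A1 ^ 2 := push_rel false false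

theorem rel12 : A1 * A2 * A1⁻¹ = A2 ^ 2 := by
  have h : A1 = PushoutI.of (φ := ϕ2) false ptt := by rw [A1, pbf_eq_ptt]
  rw [h, A2]
  exact push_rel false true

theorem rel23 : A2 * A3 * A2⁻¹ = A3 ^ 2 := by
  rw [A2_eq, A3]
  exact push_rel true false

theorem rel30 : A3 * A0 * A3⁻¹ = A0 ^ 2 := by
  have h : A3 = PushoutI.of (φ := ϕ2) true ptt := by rw [A3, pbf_eq_ptt]
  rw [h, A0_eq]
  exact push_rel true true

/-- `A1` has infinite order -/
theorem A1_zpow_eq_one {N : ℤ} (h : A1 ^ N = 1) : N = 0 := by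
  by_contra hN
  have h1 : A1 ^ N = PushoutI.of (φ := ϕ2) false (pbf ^ N) := by
    rw [A1, map_zpow]
  have h2 : pbf ^ N = PushoutI.of (φ := ϕ1) false (HG.bb ^ N) := by
    rw [pbf, map_zpow]
  rw [h1, h2] at h
  have h3 : PushoutI.of (φ := ϕ2) false (PushoutI.of (φ := ϕ1) false (HG.bb ^ N)) =
      PushoutI.of (φ := ϕ2) false (PushoutI.of (φ := ϕ1) false 1) := by
    rw [h]; simp
  have h4 := PushoutI.of_injective hϕ2 false h3
  have h5 := PushoutI.of_injective hϕ1 false h4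
  exact HG.bb_zpow_ne_one hN h5

end HigmanModel




def HigmanRel (m : ZMod 4 → ℕ) : Set (FreeGroup (ZMod 4)) :=
  {r | ∃ i : ZMod 4, r = FreeGroup.of i * FreeGroup.of (i+1) * (FreeGroup.of i)⁻¹ *
      (FreeGroup.of (i+1) ^ (m i))⁻¹}

def HigmanLike (m : ZMod 4 → ℕ) : Type := PresentedGroup (HigmanRel m)

instance (m : ZMod 4 → ℕ) : Group (HigmanLike m) := by unfold HigmanLike; infer_instance

def higmanGen (m : ZMod 4 → ℕ) (i : ZMod 4) : HigmanLike m := PresentedGroup.of i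

def Higman : Type := HigmanLike (fun _ => 2)

instance : Group Higman := by unfold Higman; infer_instance

def higmanA (i : ZMod 4) : Higman := higmanGen (fun _ => 2) i

section HigmanFacts

theorem higman_rel (i : ZMod 4) :
    higmanA i * higmanA (i+1) * (higmanA i)⁻¹ = higmanA (i+1) ^ 2 := by
  have hmem : (FreeGroup.of i * FreeGroup.of (i+1) * (FreeGroup.of i)⁻¹ *
      (FreeGroup.of (i+1) ^ 2)⁻¹ : FreeGroup (ZMod 4)) ∈
      Subgroup.normalClosure (HigmanRel (fun _ => 2)) :=
    Subgroup.subset_normalClosure ⟨i, rfl⟩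
  have h : (PresentedGroup.mk (HigmanRel (fun _ => 2)))
      (FreeGroup.of i * FreeGroup.of (i+1) * (FreeGroup.of i)⁻¹ *
        (FreeGroup.of (i+1) ^ 2)⁻¹) = 1 := by
    exact (QuotientGroup.eq_one_iff _).mpr hmem
  simp only [map_mul, map_inv, map_pow] at h
  have h2 : higmanA i * higmanA (i+1) * (higmanA i)⁻¹ * (higmanA (i+1) ^ 2)⁻¹ = 1 := h
  calc higmanA i * higmanA (i+1) * (higmanA i)⁻¹
      = higmanA i * higmanA (i+1) * (higmanA i)⁻¹ * (higmanA (i+1) ^ 2)⁻¹ *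
        higmanA (i+1) ^ 2 := by group
    _ = higmanA (i+1) ^ 2 := by rw [h2]; group

/-- universal property specialized to the Higman group -/
def higmanToGroup {G : Type*} [Group G] (g : ZMod 4 → G)
    (hg : ∀ i, g i * g (i+1) * (g i)⁻¹ = g (i+1) ^ 2) : Higman →* G :=
  PresentedGroup.toGroup (f := g) (by
    rintro r ⟨i, rfl⟩
    simp only [map_mul, map_inv, map_pow, FreeGroup.lift_apply_of]
    rw [hg i]
    group)

theorem higmanToGroup_of {G : Type*} [Group G] (g : ZMod 4 → G)
    (hg : ∀ i, g i * g (i+1) * (g i)⁻¹ = g (i+1) ^ 2) (i : ZMod 4) :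
    higmanToGroup g hg (higmanA i) = g i :=
  PresentedGroup.toGroup.of _

/-- the cyclic-shift endomorphism of the Higman group -/
def higmanShift : Higman →* Higman :=
  higmanToGroup (fun i => higmanA (i+1)) (fun i => higman_rel (i+1))

theorem higmanShift_of (i : ZMod 4) : higmanShift (higmanA i) = higmanA (i+1) :=
  higmanToGroup_of _ _ i

/-- the assignment of generators in the model -/
def gQ : ZMod 4 → HigmanModel.Q := fun i =>
  if i = 0 then HigmanModel.A0 else if i = 1 then HigmanModel.A1
    else if i = 2 then HigmanModel.A2 else HigmanModel.A3

theorem gQ0 : gQ 0 = HigmanModel.A0 := by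
  show (if (0:ZMod 4) = 0 then _ else _) = _
  rw [if_pos rfl]

theorem gQ1 : gQ 1 = HigmanModel.A1 := by
  show (if (1:ZMod 4) = 0 then _ else if (1:ZMod 4) = 1 then _ else _) = _
  rw [if_neg (show (1:ZMod 4) ≠ 0 by decide), if_pos rfl]

theorem gQ2 : gQ 2 = HigmanModel.A2 := by
  show (if (2:ZMod 4) = 0 then _ else if (2:ZMod 4) = 1 then _
    else if (2:ZMod 4) = 2 then _ else _) = _
  rw [if_neg (show (2:ZMod 4) ≠ 0 by decide), if_neg (show (2:ZMod 4) ≠ 1 by decide),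
    if_pos rfl]

theorem gQ3 : gQ 3 = HigmanModel.A3 := by
  show (if (3:ZMod 4) = 0 then _ else if (3:ZMod 4) = 1 then _
    else if (3:ZMod 4) = 2 then _ else _) = _
  rw [if_neg (show (3:ZMod 4) ≠ 0 by decide), if_neg (show (3:ZMod 4) ≠ 1 by decide),
    if_neg (show (3:ZMod 4) ≠ 2 by decide)]

theorem zmod_cases (i : ZMod 4) : i = 0 ∨ i = 1 ∨ i = 2 ∨ i = 3 :=
  (by decide : ∀ j : ZMod 4, j = 0 ∨ j = 1 ∨ j = 2 ∨ j = 3) i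

/-- the homomorphism to the model -/
def Φ : Higman →* HigmanModel.Q :=
  higmanToGroup gQ
    (by
      intro i
      rcases zmod_cases i with rfl | rfl | rfl | rfl
      · rw [show ((0:ZMod 4)+1) = 1 from by decide, gQ0, gQ1]
        exact HigmanModel.rel01
      · rw [show ((1:ZMod 4)+1) = 2 from by decide, gQ1, gQ2]
        exact HigmanModel.rel12
      · rw [show ((2:ZMod 4)+1) = 3 from by decide, gQ2, gQ3]
        exact HigmanModel.rel23
      · rw [show ((3:ZMod 4)+1) = 0 from by decide, gQ3, gQ0]
        exact HigmanModel.rel30)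

theorem Φ_of (i : ZMod 4) : Φ (higmanA i) = gQ i :=
  higmanToGroup_of _ _ i

theorem Φ_one : Φ (higmanA 1) = HigmanModel.A1 := by
  rw [Φ_of, gQ1]

/-- every generator maps to `A1` under a suitable homomorphism -/
theorem exists_hom_to_A1 (j : ZMod 4) :
    ∃ F : Higman →* HigmanModel.Q, F (higmanA j) = HigmanModel.A1 := by
  rcases zmod_cases j with rfl | rfl | rfl | rfl
  · exact ⟨Φ.comp higmanShift, by
      simp only [MonoidHom.comp_apply, higmanShift_of]
      rw [show ((0:ZMod 4)+1) = 1 from by decide, Φ_one]⟩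
  · exact ⟨Φ, Φ_one⟩
  · exact ⟨Φ.comp (higmanShift.comp (higmanShift.comp higmanShift)), by
      simp only [MonoidHom.comp_apply, higmanShift_of]
      rw [show ((2:ZMod 4)+1) = 3 from by decide,
        show ((3:ZMod 4)+1) = 0 from by decide,
        show ((0:ZMod 4)+1) = 1 from by decide, Φ_one]⟩
  · exact ⟨Φ.comp (higmanShift.comp higmanShift), by
      simp only [MonoidHom.comp_apply, higmanShift_of]
      rw [show ((3:ZMod 4)+1) = 0 from by decide,
        show ((0:ZMod 4)+1) = 1 from by decide, Φ_one]⟩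

/-- generators of the Higman group have infinite order -/
theorem higmanA_zpow_eq_one {j : ZMod 4} {N : ℤ} (h : higmanA j ^ N = 1) : N = 0 := by
  obtain ⟨F, hF⟩ := exists_hom_to_A1 j
  have h2 : F (higmanA j ^ N) = 1 := by rw [h]; exact map_one F
  rw [map_zpow, hF] at h2
  exact HigmanModel.A1_zpow_eq_one h2

end HigmanFacts


/-! ### The main theorem -/

theorem conj_pow_two {G : Type*} [Group G] {x y : G} (h : x * y * x⁻¹ = y ^ (2:ℤ)) :
    ∀ (k : ℕ) (q : ℤ), x ^ k * y ^ q * (x ^ k)⁻¹ = y ^ ((2:ℤ)^k * q) := by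
  intro k
  induction k with
  | zero => intro q; simp
  | succ k ih =>
    intro q
    have hx : x ^ (k+1) = x * x ^ k := by rw [pow_succ']
    rw [hx]
    calc x * x ^ k * y ^ q * (x * x ^ k)⁻¹
        = x * (x ^ k * y ^ q * (x ^ k)⁻¹) * x⁻¹ := by group
      _ = x * y ^ ((2:ℤ)^k * q) * x⁻¹ := by rw [ih]
      _ = (x * y * x⁻¹) ^ ((2:ℤ)^k * q) := by rw [conj_zpow]
      _ = y ^ ((2:ℤ) * ((2:ℤ)^k * q)) := by rw [h, ← zpow_mul]
      _ = y ^ ((2:ℤ)^(k+1) * q) := by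
          congr 1
          ring


/-- If an endomorphism of the Higman group maps each generator aᵢ to aᵢ^{nᵢ} with nᵢ ≠ 0,
then every nᵢ = 1 and f is the identity. -/
theorem stmt_10 (f : Higman →* Higman) (n : ZMod 4 → ℤ) (hn : ∀ i, n i ≠ 0)
    (hf : ∀ i : ZMod 4, f (higmanA i) = higmanA i ^ (n i)) :
    (∀ i : ZMod 4, n i = 1) ∧ f = MonoidHom.id Higman := by

  have key : ∀ i : ZMod 4, n i = 1 := by
    intro i
    have hq : n (i+1) ≠ 0 := hn (i+1)
    have hrelz : higmanA i * higmanA (i+1) * (higmanA i)⁻¹ = higmanA (i+1) ^ (2:ℤ) := by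
      rw [higman_rel i, ← zpow_natCast (higmanA (i+1)) 2]
      norm_num
    have hE : higmanA i ^ (n i) * higmanA (i+1) ^ (n (i+1)) * (higmanA i ^ (n i))⁻¹ =
        higmanA (i+1) ^ (2 * n (i+1)) := by
      have h1 := congrArg f (higman_rel i)
      simp only [map_mul, map_inv, map_pow] at h1
      rw [hf i, hf (i+1)] at h1
      rw [h1, ← zpow_natCast (higmanA (i+1) ^ (n (i+1))) 2, ← zpow_mul]
      congr 1
      push_cast
      ring
    have hpos : 0 < n i := by
      by_contra hple
      push_neg at hple
      have hkp : (((-n i).toNat : ℤ)) = -(n i) := Int.toNat_of_nonneg (by omega)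
      have hxp : higmanA i ^ (n i) = (higmanA i ^ ((-n i).toNat))⁻¹ := by
        rw [← zpow_natCast (higmanA i) ((-n i).toNat), hkp, zpow_neg, inv_inv]
      have h2 : higmanA (i+1) ^ (n (i+1)) =
          higmanA i ^ ((-n i).toNat) * higmanA (i+1) ^ (2 * n (i+1)) *
            (higmanA i ^ ((-n i).toNat))⁻¹ := by
        rw [← hE, hxp]
        group
      rw [conj_pow_two hrelz ((-n i).toNat) (2 * n (i+1))] at h2
      have h3 : higmanA (i+1) ^ ((2:ℤ)^((-n i).toNat) * (2 * n (i+1)) - n (i+1)) = 1 := by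
        rw [zpow_sub, ← h2]
        group
      have h4 := higmanA_zpow_eq_one h3
      have hp2 : 0 < (2:ℤ)^((-n i).toNat) := pow_pos (by norm_num) _
      have h5 : ((2:ℤ)^((-n i).toNat) * 2 - 1) * n (i+1) = 0 := by linarith [h4]
      rcases mul_eq_zero.mp h5 with h6 | h6
      · have h7 : (1:ℤ) ≤ (2:ℤ)^((-n i).toNat) := hp2
        linarith
      · exact hq h6
    have hxp : higmanA i ^ (n i) = higmanA i ^ ((n i).toNat) := by
      rw [← zpow_natCast (higmanA i) ((n i).toNat), Int.toNat_of_nonneg hpos.le]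
    rw [hxp, conj_pow_two hrelz ((n i).toNat) (n (i+1))] at hE
    have h3 : higmanA (i+1) ^ ((2:ℤ)^((n i).toNat) * n (i+1) - 2 * n (i+1)) = 1 := by
      rw [zpow_sub, hE]
      group
    have h4 := higmanA_zpow_eq_one h3
    have h5 : ((2:ℤ)^((n i).toNat) - 2) * n (i+1) = 0 := by linarith [h4]
    have h6 : (2:ℤ)^((n i).toNat) = 2 := by
      rcases mul_eq_zero.mp h5 with h6 | h6
      · linarith
      · exact absurd h6 hq
    have hpt1 : (n i).toNat = 1 := by
      have h7 : ((2:ℕ)^((n i).toNat) : ℤ) = ((2:ℕ)^1 : ℤ) := by push_cast; rw [h6]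
      have h8 : (2:ℕ)^((n i).toNat) = 2^1 := by exact_mod_cast h7
      exact Nat.pow_right_injective (le_refl 2) h8
    have : ((n i).toNat : ℤ) = n i := Int.toNat_of_nonneg hpos.le
    rw [hpt1] at this
    exact this.symm.trans (by norm_num)
  refine ⟨key, ?_⟩
  have hid : ∀ i, f (higmanA i) = higmanA i := fun i => by rw [hf i, key i, zpow_one]
  exact PresentedGroup.ext fun i => (hid i).trans rfl
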